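/- For any finite set 𝔸 of positive integers, (Σ_{a∈𝔸} τ(a)/a)² ≤ 6·(Σ_{a∈𝔸} L(a)/a)·(Σ_{a∈𝔸} W(a)/a), where W(a) is the number of ordered pairs (d, d') of divisors of a with |log(d/d')| ≤ log 2. -/

import Mathlib

open MeasureTheory Real Finset
open scoped ENNReal

noncomputable def Lset (n : ℕ) : Set ℝ :=
  ⋃ d ∈ n.divisors, Set.Ico (Real.log d - Real.log 2) (Real.log d)

noncomputable def Lm (n : ℕ) : ℝ := (volume (Lset n)).toReal

noncomputable def W (a : ℕ) : ℕ :=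
  Set.ncard {p : ℕ × ℕ | p.1 ∣ a ∧ p.2 ∣ a ∧ |Real.log p.1 - Real.log p.2| ≤ Real.log 2}

noncomputable def bidx (d : ℕ) : ℤ := ⌊Real.log d / Real.log 2⌋

lemma log2_pos : (0:ℝ) < Real.log 2 := Real.log_pos (by norm_num)

lemma bidx_mem_Ico {d : ℕ} : (bidx d : ℝ) * Real.log 2 ≤ Real.log d ∧
    Real.log d < ((bidx d : ℝ) + 1) * Real.log 2 := by
  constructor
  · rw [← le_div_iff₀ log2_pos]
    exact Int.floor_le _
  · rw [← div_lt_iff₀ log2_pos]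
    exact Int.lt_floor_add_one _

lemma abs_sub_lt_of_bidx_eq {d d' : ℕ} (h : bidx d = bidx d') :
    |Real.log d - Real.log d'| < Real.log 2 := by
  obtain ⟨h1, h2⟩ := bidx_mem_Ico (d := d)
  obtain ⟨h3, h4⟩ := bidx_mem_Ico (d := d')
  rw [h] at h1 h2
  rw [abs_sub_lt_iff]
  constructor <;> nlinarith

lemma Lset_subset (n : ℕ) : Lset n ⊆ ⋃ d ∈ n.divisors, Set.Ico (Real.log d - Real.log 2) (Real.log d) := le_refl _

lemma volume_Lset_ne_top (n : ℕ) : volume (Lset n) ≠ ⊤ := by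
  apply ne_top_of_le_ne_top ?_ (measure_biUnion_finset_le n.divisors _)
  apply ne_of_lt
  apply ENNReal.sum_lt_top.2
  intro d _
  rw [Real.volume_Ico]
  exact ENNReal.ofReal_lt_top

lemma measurable_Lset (n : ℕ) : MeasurableSet (Lset n) := by
  apply Finset.measurableSet_biUnion
  intro d _
  exact measurableSet_Ico

-- For each occupied bucket, Lset ∩ window has measure ≥ log 2.
lemma window_meas {a : ℕ} {k : ℤ} (hk : k ∈ a.divisors.image bidx) :
    ENNReal.ofReal (Real.log 2) ≤
      volume (Lset a ∩ Set.Ico (((k:ℝ) - 1) * Real.log 2) (((k:ℝ) + 1) * Real.log 2)) := by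
  obtain ⟨d, hd, hbd⟩ := Finset.mem_image.1 hk
  have h1 := (bidx_mem_Ico (d := d)).1
  have h2 := (bidx_mem_Ico (d := d)).2
  rw [hbd] at h1 h2
  have hsub : Set.Ico (Real.log d - Real.log 2) (Real.log d) ⊆
      Lset a ∩ Set.Ico (((k:ℝ) - 1) * Real.log 2) (((k:ℝ) + 1) * Real.log 2) := by
    intro x hx
    refine ⟨Set.mem_biUnion hd hx, ?_, ?_⟩
    · have := hx.1; nlinarith [log2_pos]
    · have := hx.2; nlinarith [log2_pos]
  calc ENNReal.ofReal (Real.log 2)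
      = volume (Set.Ico (Real.log d - Real.log 2) (Real.log d)) := by
        rw [Real.volume_Ico]; ring_nf
    _ ≤ _ := measure_mono hsub

-- windows for same-parity distinct buckets are disjoint
lemma window_disj {k k' : ℤ} (hpar : k % 2 = k' % 2) (hne : k ≠ k') :
    Disjoint (Set.Ico (((k:ℝ) - 1) * Real.log 2) (((k:ℝ) + 1) * Real.log 2))
      (Set.Ico (((k':ℝ) - 1) * Real.log 2) (((k':ℝ) + 1) * Real.log 2)) := by
  rw [Set.Ico_disjoint_Ico]
  have h : k + 2 ≤ k' ∨ k' + 2 ≤ k := by omega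
  rcases h with h | h
  · have hR : (k:ℝ) + 2 ≤ k' := by exact_mod_cast h
    refine le_trans inf_le_left (le_trans ?_ le_sup_right)
    nlinarith [log2_pos]
  · have hR : (k':ℝ) + 2 ≤ k := by exact_mod_cast h
    refine le_trans inf_le_right (le_trans ?_ le_sup_left)
    nlinarith [log2_pos]

-- half of claim B, for a parity class
lemma parity_bound (a : ℕ) (r : ℤ) :
    ((((a.divisors.image bidx).filter (fun k => k % 2 = r)).card : ℝ≥0∞)) *
      ENNReal.ofReal (Real.log 2) ≤ volume (Lset a) := by
  set K := (a.divisors.image bidx).filter (fun k => k % 2 = r) with hK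
  have hdisj : ∀ k ∈ K, ∀ k' ∈ K, k ≠ k' →
      Disjoint (Lset a ∩ Set.Ico (((k:ℝ) - 1) * Real.log 2) (((k:ℝ) + 1) * Real.log 2))
        (Lset a ∩ Set.Ico (((k':ℝ) - 1) * Real.log 2) (((k':ℝ) + 1) * Real.log 2)) := by
    intro k hk k' hk' hne
    have p1 := (Finset.mem_filter.1 hk).2
    have p2 := (Finset.mem_filter.1 hk').2
    exact Disjoint.mono Set.inter_subset_right Set.inter_subset_right
      (window_disj (by simp_all) hne)
  calc (K.card : ℝ≥0∞) * ENNReal.ofReal (Real.log 2)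
      = ∑ k ∈ K, ENNReal.ofReal (Real.log 2) := by
        rw [Finset.sum_const, nsmul_eq_mul]
    _ ≤ ∑ k ∈ K, volume (Lset a ∩ Set.Ico (((k:ℝ) - 1) * Real.log 2) (((k:ℝ) + 1) * Real.log 2)) := by
        apply Finset.sum_le_sum
        intro k hk
        exact window_meas (Finset.mem_filter.1 hk).1
    _ = volume (⋃ k ∈ K, Lset a ∩ Set.Ico (((k:ℝ) - 1) * Real.log 2) (((k:ℝ) + 1) * Real.log 2)) := by
        rw [measure_biUnion_finset]
        · intro k hk k' hk' hne
          exact hdisj k hk k' hk' hne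
        · intro k hk
          exact (measurable_Lset a).inter measurableSet_Ico
    _ ≤ volume (Lset a) := by
        apply measure_mono
        apply Set.iUnion₂_subset
        intro k hk
        exact Set.inter_subset_left

-- Claim B
lemma claimB (a : ℕ) :
    ((a.divisors.image bidx).card : ℝ) * Real.log 2 ≤ 2 * Lm a := by
  have h0 := parity_bound a 0
  have h1 := parity_bound a 1
  set K := a.divisors.image bidx with hKdef
  have hfc : K.filter (fun k => ¬ k % 2 = 0) = K.filter (fun k => k % 2 = 1) := by
    apply Finset.filter_congr
    intro k _
    constructor <;> omega
  have hsplit : K.card = ((K.filter (fun k => k % 2 = 0)).card) +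
      ((K.filter (fun k => k % 2 = 1)).card) := by
    rw [← hfc, Finset.card_filter_add_card_filter_not]
  have hfin := volume_Lset_ne_top a
  have hsum : ((K.card : ℝ≥0∞)) * ENNReal.ofReal (Real.log 2) ≤ 2 * volume (Lset a) := by
    rw [hsplit]
    push_cast
    rw [add_mul, two_mul]
    exact add_le_add h0 h1
  have hne : (2 : ℝ≥0∞) * volume (Lset a) ≠ ⊤ := ENNReal.mul_ne_top (by norm_num) hfin
  have hmono := ENNReal.toReal_mono hne hsum
  rw [ENNReal.toReal_mul, ENNReal.toReal_mul, ENNReal.toReal_ofReal log2_pos.le] at hmono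
  simpa [Lm] using hmono

-- W as a finset card
lemma W_eq_card (a : ℕ) (ha : 0 < a) :
    W a = ((a.divisors ×ˢ a.divisors).filter
      (fun p => |Real.log p.1 - Real.log p.2| ≤ Real.log 2)).card := by
  rw [W, ← Set.ncard_coe_finset]
  congr 1
  ext p
  simp only [Finset.coe_filter, Finset.mem_product, Set.mem_setOf_eq, Nat.mem_divisors]
  constructor
  · rintro ⟨h1, h2, h3⟩
    exact ⟨⟨⟨h1, ha.ne'⟩, ⟨h2, ha.ne'⟩⟩, h3⟩
  · rintro ⟨⟨⟨h1, _⟩, ⟨h2, _⟩⟩, h3⟩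
    exact ⟨h1, h2, h3⟩

-- Claim A
lemma claimA (a : ℕ) (ha : 0 < a) :
    ∑ k ∈ a.divisors.image bidx,
      ((a.divisors.filter (fun d => bidx d = k)).card : ℝ) ^ 2 ≤ (W a : ℝ) := by
  rw [W_eq_card a ha]
  set K := a.divisors.image bidx with hK
  set B := fun k => a.divisors.filter (fun d => bidx d = k) with hB
  have hP : (K.biUnion (fun k => (B k) ×ˢ (B k))).card = ∑ k ∈ K, ((B k).card)^2 := by
    rw [Finset.card_biUnion]
    · apply Finset.sum_congr rfl
      intro k _
      rw [Finset.card_product]; ring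
    · intro k _ k' _ hne
      simp only [Finset.disjoint_left]
      rintro ⟨p1, p2⟩ hp hq
      simp only [Finset.mem_product, hB, Finset.mem_filter] at hp hq
      exact hne (hp.1.2 ▸ hq.1.2 ▸ rfl)
  have hsub : K.biUnion (fun k => (B k) ×ˢ (B k)) ⊆
      (a.divisors ×ˢ a.divisors).filter
        (fun p => |Real.log p.1 - Real.log p.2| ≤ Real.log 2) := by
    intro p hp
    simp only [Finset.mem_biUnion, Finset.mem_product, hB, Finset.mem_filter] at hp ⊢
    obtain ⟨k, hk, ⟨⟨hd1, he1⟩, hd2, he2⟩⟩ := hp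
    exact ⟨⟨hd1, hd2⟩, (abs_sub_lt_of_bidx_eq (he1.trans he2.symm)).le⟩
  calc ∑ k ∈ K, ((B k).card : ℝ)^2
      = ((K.biUnion (fun k => (B k) ×ˢ (B k))).card : ℝ) := by
        rw [hP]; push_cast; rfl
    _ ≤ _ := by exact_mod_cast Finset.card_le_card hsub

-- tau decomposition
lemma tau_eq (a : ℕ) :
    (a.divisors.card : ℝ) = ∑ k ∈ a.divisors.image bidx,
      ((a.divisors.filter (fun d => bidx d = k)).card : ℝ) := by
  rw [Finset.card_eq_sum_card_fiberwise (f := bidx) (t := a.divisors.image bidx)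
    (fun d hd => Finset.mem_image_of_mem _ hd)]
  push_cast; rfl

-- pointwise key inequality
lemma pointwise (a : ℕ) (ha : 0 < a) :
    (a.divisors.card : ℝ)^2 * Real.log 2 ≤ 2 * Lm a * (W a : ℝ) := by
  set K := a.divisors.image bidx
  have hCS : (a.divisors.card : ℝ)^2 ≤ (K.card : ℝ) * ∑ k ∈ K,
      ((a.divisors.filter (fun d => bidx d = k)).card : ℝ) ^ 2 := by
    rw [tau_eq a]
    exact sq_sum_le_card_mul_sum_sq
  have hA := claimA a ha
  have hB := claimB a
  have hKnn : (0:ℝ) ≤ (K.card : ℝ) := Nat.cast_nonneg _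
  have hWnn : (0:ℝ) ≤ (W a : ℝ) := Nat.cast_nonneg _
  calc (a.divisors.card : ℝ)^2 * Real.log 2
      ≤ ((K.card : ℝ) * (W a : ℝ)) * Real.log 2 := by
        apply mul_le_mul_of_nonneg_right _ log2_pos.le
        calc (a.divisors.card : ℝ)^2 ≤ (K.card : ℝ) * ∑ k ∈ K, _ := hCS
          _ ≤ (K.card : ℝ) * (W a : ℝ) := mul_le_mul_of_nonneg_left hA hKnn
    _ = ((K.card : ℝ) * Real.log 2) * (W a : ℝ) := by ring
    _ ≤ (2 * Lm a) * (W a : ℝ) := mul_le_mul_of_nonneg_right hB hWnn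

lemma Lm_pos (a : ℕ) (ha : 0 < a) : Real.log 2 ≤ Lm a := by
  have h1 : (1:ℕ) ∈ a.divisors := Nat.one_mem_divisors.2 ha.ne'
  have hsub : Set.Ico (0 - Real.log 2) (0:ℝ) ⊆ Lset a := by
    intro x hx
    apply Set.mem_biUnion h1
    simpa using hx
  have hm : volume (Set.Ico (0 - Real.log 2) (0:ℝ)) ≤ volume (Lset a) := measure_mono hsub
  rw [Real.volume_Ico] at hm
  have hm2 := ENNReal.toReal_mono (volume_Lset_ne_top a) hm
  rw [ENNReal.toReal_ofReal (by linarith [log2_pos])] at hm2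
  simpa [Lm] using hm2

theorem stmt4 (A : Finset ℕ) (hA : ∀ a ∈ A, 0 < a) :
    (∑ a ∈ A, (a.divisors.card : ℝ) / a) ^ 2 ≤
      6 * (∑ a ∈ A, Lm a / a) * (∑ a ∈ A, (W a : ℝ) / a) := by
  set f : ℕ → ℝ := fun a => Real.sqrt (Lm a / a) with hf
  set g : ℕ → ℝ := fun a => ((a.divisors.card : ℝ) / a) / f a with hg
  have hfg : ∀ a ∈ A, (a.divisors.card : ℝ) / a = f a * g a := by
    intro a ha
    have hap := hA a ha
    have hLpos : 0 < Lm a := lt_of_lt_of_le log2_pos (Lm_pos a hap)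
    have hfa : 0 < f a := Real.sqrt_pos.2 (div_pos hLpos (by exact_mod_cast hap))
    simp only [hg]
    field_simp
  have hf2 : ∀ a ∈ A, f a ^ 2 = Lm a / a := by
    intro a ha
    have hap := hA a ha
    have hLpos : 0 < Lm a := lt_of_lt_of_le log2_pos (Lm_pos a hap)
    exact Real.sq_sqrt (le_of_lt (div_pos hLpos (by exact_mod_cast hap)))
  have hg2 : ∀ a ∈ A, g a ^ 2 ≤ 6 * ((W a : ℝ) / a) := by
    intro a ha
    have hap := hA a ha
    have haR : (0:ℝ) < a := by exact_mod_cast hap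
    have hLpos : 0 < Lm a := lt_of_lt_of_le log2_pos (Lm_pos a hap)
    have hfa2 : f a ^ 2 = Lm a / a := hf2 a ha
    have hfa : 0 < f a := Real.sqrt_pos.2 (div_pos hLpos haR)
    have hgval' : g a ^ 2 = (a.divisors.card : ℝ)^2 / (Lm a * a) := by
      have h1 : g a ^ 2 = ((a.divisors.card:ℝ)/a)^2 / f a ^ 2 := by
        rw [hg]; rw [div_pow]
      rw [h1, hfa2, div_pow]
      rw [div_div, show (a:ℝ)^2 * (Lm a / a) = Lm a * a by field_simp]
    rw [hgval']
    have hkey := pointwise a hap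
    -- τ² ≤ 2 Lm W / log 2, and 2/log2 ≤ 6 since log 2 ≥ 1/3
    have hlog : (1:ℝ)/3 ≤ Real.log 2 := by
      have := Real.log_two_gt_d9; linarith
    have hWnn : (0:ℝ) ≤ (W a : ℝ) := Nat.cast_nonneg _
    have h6 : (a.divisors.card : ℝ)^2 ≤ 6 * Lm a * (W a : ℝ) := by
      nlinarith [log2_pos, hWnn, hLpos, sq_nonneg ((a.divisors.card : ℝ))]
    rw [div_le_iff₀ (by positivity)]
    calc (a.divisors.card : ℝ)^2 ≤ 6 * Lm a * (W a : ℝ) := h6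
      _ = 6 * ((W a : ℝ) / a) * (Lm a * a) := by field_simp
  calc (∑ a ∈ A, (a.divisors.card : ℝ) / a) ^ 2
      = (∑ a ∈ A, f a * g a) ^ 2 := by rw [Finset.sum_congr rfl hfg]
    _ ≤ (∑ a ∈ A, f a ^ 2) * (∑ a ∈ A, g a ^ 2) := Finset.sum_mul_sq_le_sq_mul_sq A f g
    _ = (∑ a ∈ A, Lm a / a) * (∑ a ∈ A, g a ^ 2) := by rw [Finset.sum_congr rfl hf2]
    _ ≤ (∑ a ∈ A, Lm a / a) * (∑ a ∈ A, 6 * ((W a : ℝ) / a)) := by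
        apply mul_le_mul_of_nonneg_left (Finset.sum_le_sum hg2)
        apply Finset.sum_nonneg
        intro a ha
        have hap := hA a ha
        have hLpos : 0 < Lm a := lt_of_lt_of_le log2_pos (Lm_pos a hap)
        positivity
    _ = 6 * (∑ a ∈ A, Lm a / a) * (∑ a ∈ A, (W a : ℝ) / a) := by
        rw [← Finset.mul_sum]; ring
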